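/- For every integer t ≥ 1, there exists a Las Vegas one-way probabilistic one-counter automaton (Las Vegas 1P1CA) over the alphabet {a,b,c,d} that solves the promise problem ONE-NONE(t) with success probability 1 − (2/3)^t: every yes-instance is accepted with probability at least 1 − (2/3)^t and rejected with probability 0, and every no-instance is rejected with probability at least 1 − (2/3)^t and accepted with probability 0. -/

import Mathlib

/-- Input symbols extended with the left (`cent`) and right (`dollar`) end-markers. -/
inductive TSym (α : Type) : Type
  | cent : TSym α
  | letter : α → TSym α
  | dollar : TSym α

/-- The tape content `¢ w $` for an input word `w`. -/
def tagged {α : Type} (w : List α) : List (TSym α) :=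
  TSym.cent :: (w.map TSym.letter ++ [TSym.dollar])

/-- The three kinds of states of a Las Vegas automaton. -/
inductive LVDec : Type
  | acc : LVDec
  | rej : LVDec
  | unk : LVDec
deriving DecidableEq

/-- A Las Vegas one-way probabilistic one-counter automaton: the states are
partitioned into accepting, rejecting and neutral states via `lvdec`. -/
structure LasVegas1P1CA (α : Type) where
  Q : Type
  [fintypeQ : Fintype Q]
  [decQ : DecidableEq Q]
  q0 : Q
  lvdec : Q → LVDec
  m : ℕ
  δ : Q → TSym α → Bool → Q → ℤ → ℝ
  nonneg : ∀ q σ z q' c, 0 ≤ δ q σ z q' c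
  support : ∀ q σ z q' c, δ q σ z q' c ≠ 0 → |c| ≤ (m : ℤ)
  total : ∀ q σ z, (∑ q' : Q, ∑ c ∈ Finset.Icc (-(m : ℤ)) (m : ℤ), δ q σ z q' c) = 1

attribute [instance] LasVegas1P1CA.fintypeQ LasVegas1P1CA.decQ

namespace LasVegas1P1CA

variable {α : Type} (M : LasVegas1P1CA α)

/-- One step of the evolution of the probability distribution over configurations. -/
noncomputable def stepD (μ : M.Q × ℤ → ℝ) (σ : TSym α) : M.Q × ℤ → ℝ :=
  fun p' => ∑ q : M.Q, ∑ c ∈ Finset.Icc (-(M.m : ℤ)) (M.m : ℤ),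
    μ (q, p'.2 - c) * M.δ q σ (decide (p'.2 - c = 0)) p'.1 c

/-- Initial distribution: point mass on `(q0, 0)`. -/
def initD : M.Q × ℤ → ℝ := fun p => if p = (M.q0, 0) then 1 else 0

/-- Distribution over configurations after reading `¢ w $`. -/
noncomputable def finalD (w : List α) : M.Q × ℤ → ℝ := (tagged w).foldl M.stepD M.initD

/-- Total probability of computation paths ending in an accepting state. -/
noncomputable def accProb (w : List α) : ℝ :=
  ∑' p : M.Q × ℤ, if M.lvdec p.1 = LVDec.acc then M.finalD w p else 0

/-- Total probability of computation paths ending in a rejecting state. -/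
noncomputable def rejProb (w : List α) : ℝ :=
  ∑' p : M.Q × ℤ, if M.lvdec p.1 = LVDec.rej then M.finalD w p else 0

end LasVegas1P1CA

/-- The alphabet `{a, b, c, d}`. -/
inductive ΓN : Type
  | a : ΓN
  | b : ΓN
  | c : ΓN
  | d : ΓN
deriving DecidableEq

/-- Exactly one of three propositions holds. -/
def exactlyOne (P Q R : Prop) : Prop :=
  (P ∧ ¬Q ∧ ¬R) ∨ (¬P ∧ Q ∧ ¬R) ∨ (¬P ∧ ¬Q ∧ R)

/-- `#_a(u) = #_b(u)`. -/
def eqAB (u : List ΓN) : Prop := u.count ΓN.a = u.count ΓN.b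
/-- `#_b(u) = #_c(u)`. -/
def eqBC (u : List ΓN) : Prop := u.count ΓN.b = u.count ΓN.c
/-- `#_c(u) = #_a(u)`. -/
def eqCA (u : List ΓN) : Prop := u.count ΓN.c = u.count ΓN.a

/-- The language `ONE`: strings `u ++ y` with `u ∈ {a,b,c}*`, `y ∈ {d}*`,
`|y| ≥ |u|`, and exactly one of the three count equalities holding for `u`. -/
def ONE : Language ΓN :=
  {w | ∃ u y : List ΓN, w = u ++ y ∧ (∀ x ∈ u, x ≠ ΓN.d) ∧ (∀ x ∈ y, x = ΓN.d) ∧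
    u.length ≤ y.length ∧ exactlyOne (eqAB u) (eqBC u) (eqCA u)}

/-- The language `NONE`: as `ONE`, but none of the three count equalities holds. -/
def NONE : Language ΓN :=
  {w | ∃ u y : List ΓN, w = u ++ y ∧ (∀ x ∈ u, x ≠ ΓN.d) ∧ (∀ x ∈ y, x = ΓN.d) ∧
    u.length ≤ y.length ∧ ¬ eqAB u ∧ ¬ eqBC u ∧ ¬ eqCA u}

/-! ## Construction of the automaton -/

inductive Mode : Type | ab | bc | ca
deriving DecidableEq

instance : Fintype Mode := ⟨{Mode.ab, Mode.bc, Mode.ca}, fun x => by cases x <;> simp⟩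

inductive Q0 : Type
  | A : Q0
  | R : Q0
  | dr : Bool → Q0
  | ck : Bool → Mode → Bool → Q0
deriving DecidableEq, Fintype

open Q0 Mode

/-- signed contribution of a letter to the difference checked in mode `E`. -/
def dmode : Mode → ΓN → ℤ
  | .ab, .a => 1
  | .ab, .b => -1
  | .bc, .b => 1
  | .bc, .c => -1
  | .ca, .c => 1
  | .ca, .a => -1
  | _, _ => 0

/-- sign/counter update: given mode, sign bit, zero-test and letter, return
new sign bit and counter increment. -/
def updz (E : Mode) (s z : Bool) (x : ΓN) : Bool × ℤ :=
  if dmode E x = 1 then (if s || z then (true, 1) else (false, -1))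
  else if dmode E x = -1 then (if !s || z then (false, 1) else (true, -1))
  else (s, 0)

noncomputable def pk (q1 : Q0) (c1 : ℤ) : Q0 → ℤ → ℝ := fun q' c => if q' = q1 ∧ c = c1 then 1 else 0

def sk (b : Bool) : Q0 := if b then A else R

/-- the three-way probabilistic split entering a block. -/
noncomputable def drsplit (p : Bool) (x : ΓN) (q' : Q0) (c : ℤ) : ℝ :=
  (pk (ck (!p) .ab (updz .ab true true x).1) (updz .ab true true x).2 q' c
   + pk (ck (!p) .bc (updz .bc true true x).1) (updz .bc true true x).2 q' c
   + pk (ck (!p) .ca (updz .ca true true x).1) (updz .ca true true x).2 q' c) / 3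

noncomputable def δ0 : Q0 → TSym ΓN → Bool → Q0 → ℤ → ℝ
  | A, _, _ => pk A 0
  | R, _, _ => pk R 0
  | dr p, TSym.letter x, z =>
      if x = ΓN.d then (if z then pk (dr p) 0 else pk (dr p) (-1))
      else drsplit p x
  | dr p, _, _ => pk (dr p) 0
  | ck p E s, TSym.letter x, z =>
      if x = ΓN.d then (if z then pk (sk p) 0 else pk (dr p) (-1))
      else pk (ck p E (updz E s z x).1) (updz E s z x).2
  | ck p E s, _, _ => pk (ck p E s) 0

lemma updz_snd_mem (E : Mode) (s z : Bool) (x : ΓN) :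
    (updz E s z x).2 ∈ Finset.Icc (-1 : ℤ) 1 := by
  unfold updz
  split_ifs <;> simp

lemma pk_nonneg (q1 : Q0) (c1 : ℤ) (q' : Q0) (c : ℤ) : 0 ≤ pk q1 c1 q' c := by
  unfold pk; split_ifs <;> norm_num

lemma pk_support {q1 : Q0} {c1 : ℤ} (h : c1 ∈ Finset.Icc (-1 : ℤ) 1) (q' : Q0) (c : ℤ)
    (hne : pk q1 c1 q' c ≠ 0) : |c| ≤ 1 := by
  unfold pk at hne
  split_ifs at hne with hc
  · obtain ⟨-, rfl⟩ := hc
    simp only [Finset.mem_Icc] at h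
    exact abs_le.2 h
  · exact absurd rfl hne

lemma sum_pk (q1 : Q0) (c1 : ℤ) (h : c1 ∈ Finset.Icc (-1 : ℤ) 1) :
    (∑ q' : Q0, ∑ c ∈ Finset.Icc (-1 : ℤ) 1, pk q1 c1 q' c) = 1 := by
  unfold pk
  have h1 : ∀ q' : Q0, (∑ c ∈ Finset.Icc (-1 : ℤ) 1, if q' = q1 ∧ c = c1 then (1:ℝ) else 0)
      = if q' = q1 then 1 else 0 := by
    intro q'
    by_cases hq : q' = q1
    · simp only [hq, true_and, if_true]
      rw [Finset.sum_ite_eq' _ c1 (fun _ => (1:ℝ)), if_pos h]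
    · simp [hq]
  rw [Finset.sum_congr rfl fun q' _ => h1 q']
  rw [Finset.sum_ite_eq' _ q1 (fun _ => (1:ℝ))]
  simp
lemma drsplit_nonneg (p : Bool) (x : ΓN) (q' : Q0) (c : ℤ) : 0 ≤ drsplit p x q' c := by
  unfold drsplit
  have := pk_nonneg (ck (!p) .ab (updz .ab true true x).1) (updz .ab true true x).2 q' c
  have := pk_nonneg (ck (!p) .bc (updz .bc true true x).1) (updz .bc true true x).2 q' c
  have := pk_nonneg (ck (!p) .ca (updz .ca true true x).1) (updz .ca true true x).2 q' c
  linarith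

lemma drsplit_support (p : Bool) (x : ΓN) (q' : Q0) (c : ℤ)
    (h : drsplit p x q' c ≠ 0) : |c| ≤ 1 := by
  by_contra hc
  apply h
  unfold drsplit
  have z1 : pk (ck (!p) .ab (updz .ab true true x).1) (updz .ab true true x).2 q' c = 0 := by
    by_contra hne; exact hc (pk_support (updz_snd_mem _ _ _ _) _ _ hne)
  have z2 : pk (ck (!p) .bc (updz .bc true true x).1) (updz .bc true true x).2 q' c = 0 := by
    by_contra hne; exact hc (pk_support (updz_snd_mem _ _ _ _) _ _ hne)
  have z3 : pk (ck (!p) .ca (updz .ca true true x).1) (updz .ca true true x).2 q' c = 0 := by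
    by_contra hne; exact hc (pk_support (updz_snd_mem _ _ _ _) _ _ hne)
  rw [z1, z2, z3]; norm_num

lemma drsplit_total (p : Bool) (x : ΓN) :
    (∑ q' : Q0, ∑ c ∈ Finset.Icc (-1 : ℤ) 1, drsplit p x q' c) = 1 := by
  unfold drsplit
  simp only [add_div, Finset.sum_add_distrib, ← Finset.sum_div]
  rw [sum_pk _ _ (updz_snd_mem _ _ _ _), sum_pk _ _ (updz_snd_mem _ _ _ _),
    sum_pk _ _ (updz_snd_mem _ _ _ _)]
  norm_num

lemma δ0_nonneg (q : Q0) (σ : TSym ΓN) (z : Bool) (q' : Q0) (c : ℤ) : 0 ≤ δ0 q σ z q' c := by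
  rcases q with _ | _ | p | ⟨p, E, s⟩ <;> rcases σ with _ | x | _ <;>
    simp only [δ0] <;> try exact pk_nonneg _ _ _ _
  · split_ifs <;> first | exact pk_nonneg _ _ _ _ | exact drsplit_nonneg _ _ _ _
  · split_ifs <;> exact pk_nonneg _ _ _ _

lemma δ0_support (q : Q0) (σ : TSym ΓN) (z : Bool) (q' : Q0) (c : ℤ)
    (h : δ0 q σ z q' c ≠ 0) : |c| ≤ 1 := by
  have h01 : (0:ℤ) ∈ Finset.Icc (-1:ℤ) 1 := by decide
  have hm1 : (-1:ℤ) ∈ Finset.Icc (-1:ℤ) 1 := by decide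
  rcases q with _ | _ | p | ⟨p, E, s⟩ <;> rcases σ with _ | x | _ <;>
    simp only [δ0] at h <;> try exact pk_support h01 _ _ h
  · split_ifs at h
    · exact pk_support h01 _ _ h
    · exact pk_support hm1 _ _ h
    · exact drsplit_support _ _ _ _ h
  · split_ifs at h
    · exact pk_support h01 _ _ h
    · exact pk_support hm1 _ _ h
    · exact pk_support (updz_snd_mem _ _ _ _) _ _ h

set_option maxHeartbeats 1000000 in
lemma δ0_total (q : Q0) (σ : TSym ΓN) (z : Bool) :
    (∑ q' : Q0, ∑ c ∈ Finset.Icc (-1 : ℤ) 1, δ0 q σ z q' c) = 1 := by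
  have h01 : (0:ℤ) ∈ Finset.Icc (-1:ℤ) 1 := by decide
  have hm1 : (-1:ℤ) ∈ Finset.Icc (-1:ℤ) 1 := by decide
  rcases q with _ | _ | p | ⟨p, E, s⟩ <;> rcases σ with _ | x | _ <;>
    simp only [δ0] <;> try exact sum_pk _ _ h01
  · split_ifs
    · exact sum_pk _ _ h01
    · exact sum_pk _ _ hm1
    · exact drsplit_total _ _
  · split_ifs
    · exact sum_pk _ _ h01
    · exact sum_pk _ _ hm1
    · exact sum_pk _ _ (updz_snd_mem _ _ _ _)

noncomputable def M0 : LasVegas1P1CA ΓN where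
  Q := Q0
  q0 := dr false
  lvdec := fun q => match q with
    | A => LVDec.acc
    | R => LVDec.rej
    | _ => LVDec.unk
  m := 1
  δ := δ0
  nonneg := δ0_nonneg
  support := by
    intro q σ z q' c h
    simpa using δ0_support q σ z q' c h
  total := by
    intro q σ z
    simpa using δ0_total q σ z
/-! ## Distribution dynamics -/

/-- step function phrased over `Q0` (definitionally `M0.stepD`). -/
noncomputable def st (μ : Q0 × ℤ → ℝ) (σ : TSym ΓN) : Q0 × ℤ → ℝ :=
  fun p' => ∑ q : Q0, ∑ c ∈ Finset.Icc (-1 : ℤ) 1,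
    μ (q, p'.2 - c) * δ0 q σ (decide (p'.2 - c = 0)) p'.1 c

/-- Point mass at configuration `(q, n)`. -/
noncomputable def pmD (q : Q0) (n : ℤ) : Q0 × ℤ → ℝ := fun p => if p = (q, n) then 1 else 0

lemma stepD_pm (q0 : Q0) (n0 : ℤ) (σ : TSym ΓN) :
    st (pmD q0 n0) σ = fun p' => δ0 q0 σ (decide (n0 = 0)) p'.1 (p'.2 - n0) := by
  funext p'
  obtain ⟨q', n'⟩ := p'
  show (∑ q : Q0, ∑ c ∈ Finset.Icc (-1 : ℤ) 1,
      pmD q0 n0 (q, n' - c) * δ0 q σ (decide (n' - c = 0)) q' c)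
      = δ0 q0 σ (decide (n0 = 0)) q' (n' - n0)
  have key : ∀ q : Q0, ∀ c : ℤ,
      pmD q0 n0 (q, n' - c) * δ0 q σ (decide (n' - c = 0)) q' c
      = if q = q0 then (if c = n' - n0 then δ0 q0 σ (decide (n0 = 0)) q' c else 0) else 0 := by
    intro q c
    by_cases h1 : q = q0
    · by_cases h2 : c = n' - n0
      · subst h1; subst h2
        have hn : n' - (n' - n0) = n0 := by ring
        rw [hn]
        simp [pmD]
      · subst h1
        have hne : ((q, n' - c) : Q0 × ℤ) ≠ (q, n0) := by
          simp only [ne_eq, Prod.mk.injEq, not_and]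
          intro _ hc
          exact h2 (by omega)
        simp [pmD, if_neg hne, h2]
        intro hc
        exact absurd (show c = n' - n0 by omega) h2
    · have hne : ((q, n' - c) : Q0 × ℤ) ≠ (q0, n0) := by
        simp only [ne_eq, Prod.mk.injEq, not_and]
        intro h; exact absurd h h1
      simp only [pmD, if_neg hne, zero_mul, if_neg h1]
  rw [Finset.sum_congr rfl fun q _ => Finset.sum_congr rfl fun c _ => key q c]
  have inner : ∀ q : Q0, (∑ c ∈ Finset.Icc (-1 : ℤ) 1,
      if q = q0 then (if c = n' - n0 then δ0 q0 σ (decide (n0 = 0)) q' c else 0) else 0)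
      = if q = q0 then (if n' - n0 ∈ Finset.Icc (-1 : ℤ) 1
          then δ0 q0 σ (decide (n0 = 0)) q' (n' - n0) else 0) else 0 := by
    intro q
    by_cases h1 : q = q0
    · simp only [h1, if_true]
      exact Finset.sum_ite_eq' _ (n' - n0) _
    · simp [h1]
  rw [Finset.sum_congr rfl fun q _ => inner q]
  rw [Finset.sum_ite_eq' Finset.univ q0]
  simp only [Finset.mem_univ, if_true]
  by_cases hr : n' - n0 ∈ Finset.Icc (-1 : ℤ) 1
  · rw [if_pos hr]
  · rw [if_neg hr]
    by_contra hne
    apply hr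
    have := δ0_support q0 σ (decide (n0 = 0)) q' (n' - n0) (fun h => hne h.symm)
    rw [Finset.mem_Icc]
    exact abs_le.1 this

lemma step_det {q0 : Q0} {n0 : ℤ} {σ : TSym ΓN} {q1 : Q0} {c1 : ℤ}
    (h : δ0 q0 σ (decide (n0 = 0)) = pk q1 c1) :
    st (pmD q0 n0) σ = pmD q1 (n0 + c1) := by
  rw [stepD_pm, h]
  funext p'
  obtain ⟨q', n'⟩ := p'
  show (if q' = q1 ∧ n' - n0 = c1 then (1:ℝ) else 0) = if (q', n') = (q1, n0 + c1) then 1 else 0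
  have : (q' = q1 ∧ n' - n0 = c1) ↔ ((q', n') = (q1, n0 + c1)) := by
    simp only [Prod.mk.injEq]
    constructor
    · rintro ⟨h1, h2⟩; exact ⟨h1, by omega⟩
    · rintro ⟨h1, h2⟩; exact ⟨h1, by omega⟩
  rw [if_congr this rfl rfl]
lemma δ0_A (σ : TSym ΓN) (z : Bool) : δ0 A σ z = pk A 0 := by rcases σ <;> rfl
lemma δ0_R (σ : TSym ΓN) (z : Bool) : δ0 R σ z = pk R 0 := by rcases σ <;> rfl
lemma δ0_sk (b : Bool) (σ : TSym ΓN) (z : Bool) : δ0 (sk b) σ z = pk (sk b) 0 := by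
  rcases b <;> simp [sk, δ0_A, δ0_R]

lemma sink_run (b : Bool) (w : List (TSym ΓN)) :
    w.foldl st (pmD (sk b) 0) = pmD (sk b) 0 := by
  induction w with
  | nil => rfl
  | cons σ w ih =>
    have h := step_det (q0 := sk b) (n0 := 0) (σ := σ) (δ0_sk b σ _)
    simp only [List.foldl_cons, h, add_zero]
    exact ih

lemma drain_run (p : Bool) : ∀ (k : ℕ) (j : ℤ), 0 ≤ j → j ≤ k →
    (List.replicate k (TSym.letter ΓN.d)).foldl st (pmD (dr p) j) = pmD (dr p) 0 := by
  intro k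
  induction k with
  | zero =>
    intro j h0 h1
    have : j = 0 := by omega
    subst this
    rfl
  | succ k ih =>
    intro j h0 h1
    rw [List.replicate_succ, List.foldl_cons]
    by_cases hj : j = 0
    · subst hj
      have hd : δ0 (dr p) (TSym.letter ΓN.d) (decide ((0:ℤ) = 0)) = pk (dr p) 0 := by
        simp [δ0]
      rw [step_det hd]
      simpa using ih 0 le_rfl (by omega)
    · have hd : δ0 (dr p) (TSym.letter ΓN.d) (decide (j = 0)) = pk (dr p) (-1) := by
        simp [δ0, hj]
      rw [step_det hd]
      exact ih (j + (-1)) (by omega) (by omega)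

/-- abstract one-letter update of (sign, counter). -/
def chk (E : Mode) (sn : Bool × ℤ) (x : ΓN) : Bool × ℤ :=
  ((updz E sn.1 (decide (sn.2 = 0)) x).1, sn.2 + (updz E sn.1 (decide (sn.2 = 0)) x).2)

lemma check_run (E : Mode) (p : Bool) (u : List ΓN) (hu : ∀ x ∈ u, x ≠ ΓN.d) :
    ∀ s n, (u.map TSym.letter).foldl st (pmD (ck p E s) n)
      = pmD (ck p E (u.foldl (chk E) (s, n)).1) (u.foldl (chk E) (s, n)).2 := by
  induction u with
  | nil => intro s n; rfl
  | cons x u ih =>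
    intro s n
    have hx : x ≠ ΓN.d := hu x (List.mem_cons_self)
    have hd : δ0 (ck p E s) (TSym.letter x) (decide (n = 0))
        = pk (ck p E (updz E s (decide (n = 0)) x).1) (updz E s (decide (n = 0)) x).2 := by
      simp [δ0, hx]
    rw [List.map_cons, List.foldl_cons, step_det hd, List.foldl_cons]
    rw [ih (fun y hy => hu y (List.mem_cons_of_mem x hy))]
    rfl

lemma stepD_comb (a b : ℝ) (μ ν : Q0 × ℤ → ℝ) (σ : TSym ΓN) :
    st (fun pt => a * μ pt + b * ν pt) σ
      = fun pt => a * st μ σ pt + b * st ν σ pt := by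
  funext pt
  simp only [st]
  rw [Finset.mul_sum, Finset.mul_sum, ← Finset.sum_add_distrib]
  refine Finset.sum_congr rfl fun q _ => ?_
  rw [Finset.mul_sum, Finset.mul_sum, ← Finset.sum_add_distrib]
  refine Finset.sum_congr rfl fun c _ => ?_
  ring

lemma foldl_comb (w : List (TSym ΓN)) (a b : ℝ) (μ ν : Q0 × ℤ → ℝ) :
    w.foldl st (fun pt => a * μ pt + b * ν pt)
      = fun pt => a * (w.foldl st μ pt) + b * (w.foldl st ν pt) := by
  induction w generalizing μ ν with
  | nil => rfl
  | cons σ w ih =>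
    simp only [List.foldl_cons]
    rw [stepD_comb]
    exact ih _ _

lemma step_split (p : Bool) (x : ΓN) (hx : x ≠ ΓN.d) :
    st (pmD (dr p) 0) (TSym.letter x) = fun pt =>
      (pmD (ck (!p) .ab (updz .ab true true x).1) (updz .ab true true x).2 pt
       + pmD (ck (!p) .bc (updz .bc true true x).1) (updz .bc true true x).2 pt
       + pmD (ck (!p) .ca (updz .ca true true x).1) (updz .ca true true x).2 pt) / 3 := by
  rw [stepD_pm]
  funext pt
  obtain ⟨q', n'⟩ := pt
  simp [δ0, hx, drsplit, pk, pmD, Prod.ext_iff, sub_zero]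
lemma dmode_cases (E : Mode) (x : ΓN) : dmode E x = 1 ∨ dmode E x = -1 ∨ dmode E x = 0 := by
  rcases E <;> rcases x <;> simp [dmode]

lemma chk_step (E : Mode) (x : ΓN) (s : Bool) (n d : ℤ)
    (hn : n = |d|) (hs : d ≠ 0 → s = decide (0 < d)) :
    (chk E (s, n) x).2 = |d + dmode E x|
      ∧ (d + dmode E x ≠ 0 → (chk E (s, n) x).1 = decide (0 < d + dmode E x)) := by
  rcases lt_trichotomy d 0 with hd | hd | hd
  · -- d < 0 : n = -d > 0, s = false
    rw [abs_of_neg hd] at hn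
    have hz : ¬ (n = 0) := by omega
    have hs' : s = false := by
      rw [hs (by omega)]
      simp [not_lt.2 hd.le]
    rcases dmode_cases E x with hv | hv | hv <;> rw [hv] <;>
      simp only [chk, updz, hv, hs', hz] <;> norm_num
    · exact ⟨by rw [abs_of_nonpos (by omega)]; omega,
        fun h => by omega⟩
    · exact ⟨by rw [abs_of_neg (by omega)]; omega,
        fun h => by omega⟩
    · exact ⟨by rw [abs_of_neg hd]; omega,
        fun h => by omega⟩
  · -- d = 0 : n = 0
    subst hd
    simp only [abs_zero] at hn
    subst hn
    rcases dmode_cases E x with hv | hv | hv <;> rw [hv] <;>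
      simp [chk, updz, hv]
  · -- d > 0 : n = d > 0, s = true
    rw [abs_of_pos hd] at hn
    have hz : ¬ (n = 0) := by omega
    have hs' : s = true := by
      rw [hs (by omega)]
      simp [hd]
    rcases dmode_cases E x with hv | hv | hv <;> rw [hv] <;>
      simp only [chk, updz, hv, hs', hz] <;> norm_num
    · exact ⟨by rw [abs_of_pos (by omega)]; omega,
        fun h => by omega⟩
    · exact ⟨by rw [abs_of_nonneg (by omega)]; omega,
        fun h => by omega⟩
    · exact ⟨by rw [abs_of_pos hd]; omega,
        fun h => by omega⟩

lemma chk_sem (E : Mode) (u : List ΓN) : ∀ (d : ℤ) (s : Bool) (n : ℤ),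
    n = |d| → (d ≠ 0 → s = decide (0 < d)) →
    (u.foldl (chk E) (s, n)).2 = |d + (u.map (dmode E)).sum|
      ∧ (d + (u.map (dmode E)).sum ≠ 0 →
          (u.foldl (chk E) (s, n)).1 = decide (0 < d + (u.map (dmode E)).sum)) := by
  induction u with
  | nil => intro d s n hn hs; simpa using ⟨hn, hs⟩
  | cons x u ih =>
    intro d s n hn hs
    obtain ⟨h1, h2⟩ := chk_step E x s n d hn hs
    have := ih (d + dmode E x) (chk E (s, n) x).1 (chk E (s, n) x).2 h1 h2
    simpa [add_assoc] using this
lemma sum_dmode_ab (u : List ΓN) :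
    (u.map (dmode .ab)).sum = (u.count ΓN.a : ℤ) - (u.count ΓN.b : ℤ) := by
  induction u with
  | nil => simp
  | cons x u ih =>
    rcases x <;> simp [dmode, List.count_cons, ih] <;> ring

lemma sum_dmode_bc (u : List ΓN) :
    (u.map (dmode .bc)).sum = (u.count ΓN.b : ℤ) - (u.count ΓN.c : ℤ) := by
  induction u with
  | nil => simp
  | cons x u ih =>
    rcases x <;> simp [dmode, List.count_cons, ih] <;> ring

lemma sum_dmode_ca (u : List ΓN) :
    (u.map (dmode .ca)).sum = (u.count ΓN.c : ℤ) - (u.count ΓN.a : ℤ) := by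
  induction u with
  | nil => simp
  | cons x u ih =>
    rcases x <;> simp [dmode, List.count_cons, ih] <;> ring

lemma eqAB_iff (u : List ΓN) : eqAB u ↔ (u.map (dmode .ab)).sum = 0 := by
  rw [sum_dmode_ab, sub_eq_zero, eqAB]
  exact_mod_cast Iff.rfl

lemma eqBC_iff (u : List ΓN) : eqBC u ↔ (u.map (dmode .bc)).sum = 0 := by
  rw [sum_dmode_bc, sub_eq_zero, eqBC]
  exact_mod_cast Iff.rfl

lemma eqCA_iff (u : List ΓN) : eqCA u ↔ (u.map (dmode .ca)).sum = 0 := by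
  rw [sum_dmode_ca, sub_eq_zero, eqCA]
  exact_mod_cast Iff.rfl

lemma dmode_abs_le (E : Mode) (x : ΓN) : |dmode E x| ≤ 1 := by
  rcases E <;> rcases x <;> simp [dmode]

lemma sum_dmode_abs_le (E : Mode) (u : List ΓN) :
    |(u.map (dmode E)).sum| ≤ (u.length : ℤ) := by
  induction u with
  | nil => simp
  | cons x u ih =>
    rw [List.map_cons, List.sum_cons, List.length_cons]
    calc |dmode E x + (u.map (dmode E)).sum| ≤ |dmode E x| + |(u.map (dmode E)).sum| := abs_add_le _ _
      _ ≤ 1 + (u.length : ℤ) := add_le_add (dmode_abs_le E x) ih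
      _ = ((u.length + 1 : ℕ) : ℤ) := by push_cast; ring

lemma stepD_comb3 (μ1 μ2 μ3 : Q0 × ℤ → ℝ) (σ : TSym ΓN) :
    st (fun pt => (μ1 pt + μ2 pt + μ3 pt) / 3) σ
      = fun pt => (st μ1 σ pt + st μ2 σ pt + st μ3 σ pt) / 3 := by
  funext pt
  simp only [st]
  have h1 : ∀ q : Q0, ∀ c : ℤ,
      (μ1 (q, pt.2 - c) + μ2 (q, pt.2 - c) + μ3 (q, pt.2 - c)) / 3
          * δ0 q σ (decide (pt.2 - c = 0)) pt.1 c
      = (μ1 (q, pt.2 - c) * δ0 q σ (decide (pt.2 - c = 0)) pt.1 c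
         + μ2 (q, pt.2 - c) * δ0 q σ (decide (pt.2 - c = 0)) pt.1 c
         + μ3 (q, pt.2 - c) * δ0 q σ (decide (pt.2 - c = 0)) pt.1 c) / 3 :=
    fun q c => by ring
  trans (∑ q : Q0, ∑ c ∈ Finset.Icc (-1 : ℤ) 1,
      (μ1 (q, pt.2 - c) * δ0 q σ (decide (pt.2 - c = 0)) pt.1 c
       + μ2 (q, pt.2 - c) * δ0 q σ (decide (pt.2 - c = 0)) pt.1 c
       + μ3 (q, pt.2 - c) * δ0 q σ (decide (pt.2 - c = 0)) pt.1 c) / 3)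
  · exact Finset.sum_congr rfl fun q _ => Finset.sum_congr rfl fun c _ => h1 q c
  · simp only [← Finset.sum_div, Finset.sum_add_distrib]

lemma foldl_comb3 (w : List (TSym ΓN)) (μ1 μ2 μ3 : Q0 × ℤ → ℝ) :
    w.foldl st (fun pt => (μ1 pt + μ2 pt + μ3 pt) / 3)
      = fun pt => ((w.foldl st μ1 pt) + (w.foldl st μ2 pt)
          + (w.foldl st μ3 pt)) / 3 := by
  induction w generalizing μ1 μ2 μ3 with
  | nil => rfl
  | cons σ w ih =>
    simp only [List.foldl_cons]
    rw [stepD_comb3]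
    exact ih _ _ _

lemma dtail_run (k : ℕ) (pp : Bool) (E : Mode) (s : Bool) (n : ℤ)
    (hn : 0 ≤ n) (hk : n ≤ k) (h1 : 1 ≤ k) :
    (List.replicate k (TSym.letter ΓN.d)).foldl st (pmD (ck pp E s) n)
      = if n = 0 then pmD (sk pp) 0 else pmD (dr pp) 0 := by
  obtain ⟨k', rfl⟩ : ∃ k', k = k' + 1 := ⟨k - 1, by omega⟩
  rw [List.replicate_succ, List.foldl_cons]
  by_cases hn0 : n = 0
  · subst hn0
    have hd : δ0 (ck pp E s) (TSym.letter ΓN.d) (decide ((0:ℤ) = 0)) = pk (sk pp) 0 := by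
      simp [δ0]
    rw [step_det hd, if_pos rfl]
    simpa using sink_run pp _
  · have hd : δ0 (ck pp E s) (TSym.letter ΓN.d) (decide (n = 0)) = pk (dr pp) (-1) := by
      simp [δ0, hn0]
    rw [step_det hd, if_neg hn0]
    exact drain_run pp k' (n + (-1)) (by omega) (by omega)

/-- the result of reading one block `u ++ y` from the waiting state. -/
lemma block_run (u y : List ΓN) (hu : ∀ x ∈ u, x ≠ ΓN.d) (hy : ∀ x ∈ y, x = ΓN.d)
    (hlen : u.length ≤ y.length) (hne : u ≠ []) (p : Bool) :
    (((u ++ y).map TSym.letter).foldl st (pmD (dr p) 0))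
      = fun pt =>
        ((if (u.map (dmode .ab)).sum = 0 then pmD (sk (!p)) 0 pt else pmD (dr (!p)) 0 pt)
         + (if (u.map (dmode .bc)).sum = 0 then pmD (sk (!p)) 0 pt else pmD (dr (!p)) 0 pt)
         + (if (u.map (dmode .ca)).sum = 0 then pmD (sk (!p)) 0 pt else pmD (dr (!p)) 0 pt)) / 3 := by
  obtain ⟨x, u', rfl⟩ : ∃ x u', u = x :: u' := by
    cases u with
    | nil => exact absurd rfl hne
    | cons x u' => exact ⟨x, u', rfl⟩
  have hyrep : y = List.replicate y.length ΓN.d := List.eq_replicate_iff.2 ⟨rfl, hy⟩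
  have hx : x ≠ ΓN.d := hu x (List.mem_cons_self)
  have hu' : ∀ z ∈ u', z ≠ ΓN.d := fun z hz => hu z (List.mem_cons_of_mem x hz)
  rw [List.map_append, List.map_cons, List.foldl_append, List.foldl_cons]
  rw [step_split p x hx]
  rw [foldl_comb3 (u'.map TSym.letter)
      (pmD (ck (!p) .ab (updz .ab true true x).1) (updz .ab true true x).2)
      (pmD (ck (!p) .bc (updz .bc true true x).1) (updz .bc true true x).2)
      (pmD (ck (!p) .ca (updz .ca true true x).1) (updz .ca true true x).2)]
  rw [foldl_comb3 (y.map TSym.letter) _ _ _]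
  -- handle each of the three branches
  have branch : ∀ E : Mode,
      (y.map TSym.letter).foldl st
        ((u'.map TSym.letter).foldl st
          (pmD (ck (!p) E (updz E true true x).1) (updz E true true x).2))
      = if ((x :: u').map (dmode E)).sum = 0 then pmD (sk (!p)) 0 else pmD (dr (!p)) 0 := by
    intro E
    rw [check_run E (!p) u' hu']
    have hstart : u'.foldl (chk E) ((updz E true true x).1, (updz E true true x).2)
        = (x :: u').foldl (chk E) (true, 0) := by
      rw [List.foldl_cons]
      congr 1
      simp [chk]
    rw [hstart]
    have hsem := chk_sem E (x :: u') 0 true 0 (by simp) (by simp)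
    rw [zero_add] at hsem
    set S := ((x :: u').foldl (chk E) (true, 0)) with hS
    have hN : S.2 = |((x :: u').map (dmode E)).sum| := hsem.1
    have hb := sum_dmode_abs_le E (x :: u')
    have hk1 : 1 ≤ y.length := le_trans (by simp) hlen
    rw [hyrep, List.map_replicate]
    rw [dtail_run y.length (!p) E S.1 S.2 (by rw [hN]; exact abs_nonneg _)
      (by rw [hN]; exact le_trans hb (by exact_mod_cast hlen)) hk1]
    have : (S.2 = 0) = (((x :: u').map (dmode E)).sum = 0) := by
      rw [hN]
      simp [abs_eq_zero]
    simp only [this]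
  funext pt
  rw [branch Mode.ab, branch Mode.bc, branch Mode.ca]
  split_ifs <;> rfl
lemma one_run (w : List ΓN) (hw : w ∈ ONE) (p : Bool) :
    (w.map TSym.letter).foldl st (pmD (dr p) 0)
      = fun pt => 1/3 * pmD (sk (!p)) 0 pt + 2/3 * pmD (dr (!p)) 0 pt := by
  obtain ⟨u, y, rfl, hu, hy, hlen, hone⟩ := hw
  have hne : u ≠ [] := by
    rintro rfl
    have e1 : eqAB ([] : List ΓN) := rfl
    have e2 : eqBC ([] : List ΓN) := rfl
    have e3 : eqCA ([] : List ΓN) := rfl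
    rcases hone with ⟨h1, h2, h3⟩ | ⟨h1, h2, h3⟩ | ⟨h1, h2, h3⟩
    · exact h2 e2
    · exact h1 e1
    · exact h1 e1
  rw [block_run u y hu hy hlen hne p]
  funext pt
  rcases hone with ⟨h1, h2, h3⟩ | ⟨h1, h2, h3⟩ | ⟨h1, h2, h3⟩
  · rw [if_pos ((eqAB_iff u).1 h1),
      if_neg (fun hh => h2 ((eqBC_iff u).2 hh)),
      if_neg (fun hh => h3 ((eqCA_iff u).2 hh))]
    ring
  · rw [if_neg (fun hh => h1 ((eqAB_iff u).2 hh)),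
      if_pos ((eqBC_iff u).1 h2),
      if_neg (fun hh => h3 ((eqCA_iff u).2 hh))]
    ring
  · rw [if_neg (fun hh => h1 ((eqAB_iff u).2 hh)),
      if_neg (fun hh => h2 ((eqBC_iff u).2 hh)),
      if_pos ((eqCA_iff u).1 h3)]
    ring

lemma none_run (w : List ΓN) (hw : w ∈ NONE) (p : Bool) :
    (w.map TSym.letter).foldl st (pmD (dr p) 0) = pmD (dr (!p)) 0 := by
  obtain ⟨u, y, rfl, hu, hy, hlen, h1, h2, h3⟩ := hw
  have hne : u ≠ [] := by
    rintro rfl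
    exact h1 rfl
  rw [block_run u y hu hy hlen hne p]
  funext pt
  rw [if_neg (fun hh => h1 ((eqAB_iff u).2 hh)),
    if_neg (fun hh => h2 ((eqBC_iff u).2 hh)),
    if_neg (fun hh => h3 ((eqCA_iff u).2 hh))]
  ring

lemma yes_run : ∀ (t : ℕ) (w : List ΓN), w ∈ (ONE * NONE) ^ t →
    (w.map TSym.letter).foldl st (pmD (dr false) 0)
      = fun pt => (1 - (2/3 : ℝ) ^ t) * pmD A 0 pt + (2/3 : ℝ) ^ t * pmD (dr false) 0 pt := by
  intro t
  induction t with
  | zero =>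
    intro w hw
    have hww : w = [] := by simpa using hw
    subst hww
    funext pt
    simp only [List.map_nil, List.foldl_nil, pow_zero]
    ring
  | succ t ih =>
    intro w hw
    rw [pow_succ] at hw
    obtain ⟨w1, hw1, w2, hw2, rfl⟩ := Language.mem_mul.1 hw
    obtain ⟨wo, hwo, wn, hwn, rfl⟩ := Language.mem_mul.1 hw2
    rw [List.map_append, List.map_append, List.foldl_append, List.foldl_append]
    rw [ih w1 hw1]
    rw [foldl_comb (wo.map TSym.letter) _ _ _ _]
    have hA : List.foldl st (pmD A 0) (wo.map TSym.letter) = pmD A 0 := sink_run true _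
    rw [hA, one_run wo hwo false]
    have flat : (fun pt => (1 - (2/3 : ℝ) ^ t) * pmD A 0 pt
          + (2/3 : ℝ) ^ t * ((fun pt => 1/3 * pmD (sk (!false)) 0 pt
              + 2/3 * pmD (dr (!false)) 0 pt) pt))
        = fun pt => ((1 - (2/3 : ℝ) ^ t) + (2/3 : ℝ) ^ t / 3) * pmD A 0 pt
            + (2 * (2/3 : ℝ) ^ t / 3) * pmD (dr true) 0 pt := by
      funext pt
      show (1 - (2/3 : ℝ) ^ t) * pmD A 0 pt
          + (2/3 : ℝ) ^ t * (1/3 * pmD (sk true) 0 pt + 2/3 * pmD (dr true) 0 pt) = _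
      have hsk : sk true = A := rfl
      rw [hsk]
      ring
    rw [flat]
    rw [foldl_comb (wn.map TSym.letter) _ _ _ _]
    have hA2 : List.foldl st (pmD A 0) (wn.map TSym.letter) = pmD A 0 := sink_run true _
    rw [hA2, none_run wn hwn true]
    funext pt
    show ((1 - (2/3 : ℝ) ^ t) + (2/3 : ℝ) ^ t / 3) * pmD A 0 pt
        + (2 * (2/3 : ℝ) ^ t / 3) * pmD (dr (!true)) 0 pt = _
    have hb : (!true) = false := rfl
    rw [hb, pow_succ]
    ring

lemma no_run : ∀ (t : ℕ) (w : List ΓN), w ∈ (NONE * ONE) ^ t →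
    (w.map TSym.letter).foldl st (pmD (dr false) 0)
      = fun pt => (1 - (2/3 : ℝ) ^ t) * pmD R 0 pt + (2/3 : ℝ) ^ t * pmD (dr false) 0 pt := by
  intro t
  induction t with
  | zero =>
    intro w hw
    have hww : w = [] := by simpa using hw
    subst hww
    funext pt
    simp only [List.map_nil, List.foldl_nil, pow_zero]
    ring
  | succ t ih =>
    intro w hw
    rw [pow_succ] at hw
    obtain ⟨w1, hw1, w2, hw2, rfl⟩ := Language.mem_mul.1 hw
    obtain ⟨wn, hwn, wo, hwo, rfl⟩ := Language.mem_mul.1 hw2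
    rw [List.map_append, List.map_append, List.foldl_append, List.foldl_append]
    rw [ih w1 hw1]
    rw [foldl_comb (wn.map TSym.letter) _ _ _ _]
    have hR : List.foldl st (pmD R 0) (wn.map TSym.letter) = pmD R 0 := sink_run false _
    rw [hR, none_run wn hwn false]
    rw [foldl_comb (wo.map TSym.letter) _ _ _ _]
    have hR2 : List.foldl st (pmD R 0) (wo.map TSym.letter) = pmD R 0 := sink_run false _
    rw [hR2, one_run wo hwo (!false)]
    funext pt
    show (1 - (2/3 : ℝ) ^ t) * pmD R 0 pt
        + (2/3 : ℝ) ^ t * (1/3 * pmD (sk (! !false)) 0 pt + 2/3 * pmD (dr (! !false)) 0 pt) = _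
    have hsk : sk (! !false) = R := rfl
    have hb : (! !false) = false := rfl
    rw [hsk, hb, pow_succ]
    ring
lemma st_eq : M0.stepD = st := rfl

lemma initD_eq : M0.initD = pmD (dr false) 0 := rfl

lemma finalD_yes (t : ℕ) (w : List ΓN) (hw : w ∈ (ONE * NONE) ^ t) :
    M0.finalD w = fun pt => (1 - (2/3 : ℝ) ^ t) * pmD A 0 pt
      + (2/3 : ℝ) ^ t * pmD (dr false) 0 pt := by
  show (tagged w).foldl M0.stepD M0.initD = _
  rw [st_eq, initD_eq]
  unfold tagged
  show List.foldl st (pmD (dr false) 0) (TSym.cent :: (List.map TSym.letter w ++ [TSym.dollar]))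
    = fun pt : Q0 × ℤ => (1 - (2/3 : ℝ) ^ t) * pmD A 0 pt + (2/3 : ℝ) ^ t * pmD (dr false) 0 pt
  rw [List.foldl_cons]
  have hcent : st (pmD (dr false) 0) TSym.cent = pmD (dr false) 0 := by
    have h := step_det (q0 := dr false) (n0 := 0) (σ := TSym.cent)
      (q1 := dr false) (c1 := 0) rfl
    simpa using h
  rw [hcent, List.foldl_append, yes_run t w hw]
  rw [foldl_comb [TSym.dollar] _ _ _ _]
  have hA : List.foldl st (pmD A 0) [TSym.dollar] = pmD A 0 := sink_run true _
  have hdr : List.foldl st (pmD (dr false) 0) [TSym.dollar] = pmD (dr false) 0 := by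
    have h := step_det (q0 := dr false) (n0 := 0) (σ := TSym.dollar)
      (q1 := dr false) (c1 := 0) rfl
    simp only [List.foldl_cons, List.foldl_nil, h, add_zero]
  rw [hA, hdr]

lemma finalD_no (t : ℕ) (w : List ΓN) (hw : w ∈ (NONE * ONE) ^ t) :
    M0.finalD w = fun pt => (1 - (2/3 : ℝ) ^ t) * pmD R 0 pt
      + (2/3 : ℝ) ^ t * pmD (dr false) 0 pt := by
  show (tagged w).foldl M0.stepD M0.initD = _
  rw [st_eq, initD_eq]
  unfold tagged
  show List.foldl st (pmD (dr false) 0) (TSym.cent :: (List.map TSym.letter w ++ [TSym.dollar]))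
    = fun pt : Q0 × ℤ => (1 - (2/3 : ℝ) ^ t) * pmD R 0 pt + (2/3 : ℝ) ^ t * pmD (dr false) 0 pt
  rw [List.foldl_cons]
  have hcent : st (pmD (dr false) 0) TSym.cent = pmD (dr false) 0 := by
    have h := step_det (q0 := dr false) (n0 := 0) (σ := TSym.cent)
      (q1 := dr false) (c1 := 0) rfl
    simpa using h
  rw [hcent, List.foldl_append, no_run t w hw]
  rw [foldl_comb [TSym.dollar] _ _ _ _]
  have hR : List.foldl st (pmD R 0) [TSym.dollar] = pmD R 0 := sink_run false _
  have hdr : List.foldl st (pmD (dr false) 0) [TSym.dollar] = pmD (dr false) 0 := by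
    have h := step_det (q0 := dr false) (n0 := 0) (σ := TSym.dollar)
      (q1 := dr false) (c1 := 0) rfl
    simp only [List.foldl_cons, List.foldl_nil, h, add_zero]
  rw [hR, hdr]

lemma lvdec_vals : M0.lvdec A = LVDec.acc ∧ M0.lvdec R = LVDec.rej
    ∧ (∀ p, M0.lvdec (dr p) = LVDec.unk) ∧ (∀ p E s, M0.lvdec (ck p E s) = LVDec.unk) :=
  ⟨rfl, rfl, fun _ => rfl, fun _ _ _ => rfl⟩

lemma accProb_yes (t : ℕ) (w : List ΓN) (hw : w ∈ (ONE * NONE) ^ t) :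
    M0.accProb w = 1 - (2/3 : ℝ) ^ t := by
  unfold LasVegas1P1CA.accProb
  rw [finalD_yes t w hw]
  have hfun : (fun p : M0.Q × ℤ => if M0.lvdec p.1 = LVDec.acc then
        ((fun pt => (1 - (2/3 : ℝ) ^ t) * pmD A 0 pt
          + (2/3 : ℝ) ^ t * pmD (dr false) 0 pt) p) else 0)
      = fun p => if p = ((A : Q0), (0 : ℤ)) then (1 - (2/3 : ℝ) ^ t) else 0 := by
    funext p
    change Q0 × ℤ at p
    obtain ⟨q, n⟩ := p
    rcases q with _ | _ | p' | _
    · by_cases hn : n = 0 <;>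
        simp [pmD, Prod.ext_iff, hn, lvdec_vals.1]
    · simp [pmD, Prod.ext_iff, lvdec_vals.2.1]
    · simp [pmD, Prod.ext_iff, lvdec_vals.2.2.1]
    · simp [pmD, Prod.ext_iff, lvdec_vals.2.2.2]
  rw [hfun]
  exact tsum_ite_eq ((A : Q0), (0 : ℤ)) _

lemma rejProb_yes (t : ℕ) (w : List ΓN) (hw : w ∈ (ONE * NONE) ^ t) :
    M0.rejProb w = 0 := by
  unfold LasVegas1P1CA.rejProb
  rw [finalD_yes t w hw]
  have hfun : (fun p : M0.Q × ℤ => if M0.lvdec p.1 = LVDec.rej then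
        ((fun pt => (1 - (2/3 : ℝ) ^ t) * pmD A 0 pt
          + (2/3 : ℝ) ^ t * pmD (dr false) 0 pt) p) else 0)
      = fun _ => (0 : ℝ) := by
    funext p
    change Q0 × ℤ at p
    obtain ⟨q, n⟩ := p
    rcases q with _ | _ | p' | _
    · simp [pmD, Prod.ext_iff, lvdec_vals.1]
    · simp [pmD, Prod.ext_iff, lvdec_vals.2.1]
    · simp [pmD, Prod.ext_iff, lvdec_vals.2.2.1]
    · simp [pmD, Prod.ext_iff, lvdec_vals.2.2.2]
  rw [hfun]
  exact tsum_zero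

lemma rejProb_no (t : ℕ) (w : List ΓN) (hw : w ∈ (NONE * ONE) ^ t) :
    M0.rejProb w = 1 - (2/3 : ℝ) ^ t := by
  unfold LasVegas1P1CA.rejProb
  rw [finalD_no t w hw]
  have hfun : (fun p : M0.Q × ℤ => if M0.lvdec p.1 = LVDec.rej then
        ((fun pt => (1 - (2/3 : ℝ) ^ t) * pmD R 0 pt
          + (2/3 : ℝ) ^ t * pmD (dr false) 0 pt) p) else 0)
      = fun p => if p = ((R : Q0), (0 : ℤ)) then (1 - (2/3 : ℝ) ^ t) else 0 := by
    funext p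
    change Q0 × ℤ at p
    obtain ⟨q, n⟩ := p
    rcases q with _ | _ | p' | _
    · simp [pmD, Prod.ext_iff, lvdec_vals.1]
    · by_cases hn : n = 0 <;>
        simp [pmD, Prod.ext_iff, hn, lvdec_vals.2.1]
    · simp [pmD, Prod.ext_iff, lvdec_vals.2.2.1]
    · simp [pmD, Prod.ext_iff, lvdec_vals.2.2.2]
  rw [hfun]
  exact tsum_ite_eq ((R : Q0), (0 : ℤ)) _

lemma accProb_no (t : ℕ) (w : List ΓN) (hw : w ∈ (NONE * ONE) ^ t) :
    M0.accProb w = 0 := by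
  unfold LasVegas1P1CA.accProb
  rw [finalD_no t w hw]
  have hfun : (fun p : M0.Q × ℤ => if M0.lvdec p.1 = LVDec.acc then
        ((fun pt => (1 - (2/3 : ℝ) ^ t) * pmD R 0 pt
          + (2/3 : ℝ) ^ t * pmD (dr false) 0 pt) p) else 0)
      = fun _ => (0 : ℝ) := by
    funext p
    change Q0 × ℤ at p
    obtain ⟨q, n⟩ := p
    rcases q with _ | _ | p' | _
    · simp [pmD, Prod.ext_iff, lvdec_vals.1]
    · simp [pmD, Prod.ext_iff, lvdec_vals.2.1]
    · simp [pmD, Prod.ext_iff, lvdec_vals.2.2.1]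
    · simp [pmD, Prod.ext_iff, lvdec_vals.2.2.2]
  rw [hfun]
  exact tsum_zero
/-- for every `t ≥ 1`, a Las Vegas 1P1CA solves `ONE-NONE(t)` with
success probability `1 - (2/3)^t`. -/
theorem stmt5 (t : ℕ) (ht : 1 ≤ t) : ∃ M : LasVegas1P1CA ΓN,
    (∀ w ∈ (ONE * NONE) ^ t, 1 - (2 / 3 : ℝ) ^ t ≤ M.accProb w ∧ M.rejProb w = 0) ∧
    (∀ w ∈ (NONE * ONE) ^ t, 1 - (2 / 3 : ℝ) ^ t ≤ M.rejProb w ∧ M.accProb w = 0) := by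
  refine ⟨M0, fun w hw => ⟨?_, rejProb_yes t w hw⟩, fun w hw => ⟨?_, accProb_no t w hw⟩⟩
  · rw [accProb_yes t w hw]
  · rw [rejProb_no t w hw]
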